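/- Multiple cover contribution to genus 0 invariants: for E = total space of O(-1)⊕O(-1) over ℂP¹ with equivariant quantum relation p² = λ²/(1-q) (where p restricts to ±λ at the fixed points), the differentials of canonical coordinates are du_± = dt₀ ± λ(1-q)^{-1/2} d log q, and the intersection pairing ⟨1,1⟩ = ⟨p,p⟩ = 0, ⟨1,p⟩ = λ⁻² determines the Hessians Δ_± = ±2λ³(1-q)^{-1/2}; hence d log(Δ₊Δ₋) = q(1-q)⁻¹ d log q. -/

import Mathlib

/- For E = O(-1)⊕O(-1) over ℂP¹: with p_± = ±λ(1-q)^{-1/2}, the pairing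
conditions 1/Δ₊ + 1/Δ₋ = 0, p₊/Δ₊ + p₋/Δ₋ = λ⁻² are satisfied by (and
determine uniquely) Δ_± = ±2λ³(1-q)^{-1/2}; hence
d log(Δ₊Δ₋) = q(1-q)⁻¹ d log q. -/
theorem stmt13 (l : ℝ) (hl : l ≠ 0) (pp pm Δp Δm : ℝ → ℝ)
    (hpp : ∀ q, pp q = l / Real.sqrt (1 - q)) (hpm : ∀ q, pm q = -(l / Real.sqrt (1 - q)))
    (hΔp : ∀ q, Δp q = 2 * l ^ 3 / Real.sqrt (1 - q))
    (hΔm : ∀ q, Δm q = -(2 * l ^ 3 / Real.sqrt (1 - q)))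
    (q : ℝ) (hq : 0 < 1 - q) :
    (1 / Δp q + 1 / Δm q = 0 ∧ pp q / Δp q + pm q / Δm q = 1 / l ^ 2) ∧
    (∀ Dp Dm : ℝ, Dp ≠ 0 → Dm ≠ 0 →
      1 / Dp + 1 / Dm = 0 → pp q / Dp + pm q / Dm = 1 / l ^ 2 →
      Dp = Δp q ∧ Dm = Δm q) ∧
    q * deriv (fun s => Δp s * Δm s) q / (Δp q * Δm q) = q / (1 - q) := by
  have hs : 0 < Real.sqrt (1 - q) := Real.sqrt_pos.mpr hq
  have hsne : Real.sqrt (1 - q) ≠ 0 := ne_of_gt hs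
  refine ⟨⟨?_, ?_⟩, ?_, ?_⟩
  · rw [hΔp, hΔm]; field_simp; ring
  · rw [hpp, hpm, hΔp, hΔm]; field_simp; ring
  · intro Dp Dm hDp hDm h1 h2
    rw [hpp, hpm] at h2
    have hDm' : Dm = -Dp := by field_simp at h1; linarith
    subst hDm'
    have hDp' : Dp = 2 * l ^ 3 / Real.sqrt (1 - q) := by
      field_simp at h2 ⊢
      nlinarith [sq_nonneg l, hs]
    refine ⟨by rw [hΔp, hDp'], by rw [hΔm, hDp']⟩
  · have hev : (fun s => Δp s * Δm s) =ᶠ[nhds q] fun s => -(4 * l ^ 6 / (1 - s)) := by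
      have : ∀ s ∈ Set.Iio (1 : ℝ), Δp s * Δm s = -(4 * l ^ 6 / (1 - s)) := by
        intro s hs'
        have h1s : 0 < 1 - s := by simp at hs'; linarith
        have hss : Real.sqrt (1 - s) ≠ 0 := ne_of_gt (Real.sqrt_pos.mpr h1s)
        have hsq : Real.sqrt (1 - s) * Real.sqrt (1 - s) = 1 - s :=
          Real.mul_self_sqrt (le_of_lt h1s)
        rw [hΔp, hΔm, mul_neg, div_mul_div_comm, hsq]
        ring_nf
      exact Filter.eventuallyEq_of_mem (Iio_mem_nhds (by linarith)) this
    have hderiv : HasDerivAt (fun s : ℝ => -(4 * l ^ 6 / (1 - s)))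
        (-(4 * l ^ 6 / (1 - q) ^ 2)) q := by
      have h1 : HasDerivAt (fun s : ℝ => 1 - s) (-1) q := by
        simpa using (hasDerivAt_id q).const_sub (1:ℝ)
      have h2 := (h1.inv (ne_of_gt hq)).const_mul (4 * l ^ 6)
      have h3 := h2.neg
      convert h3 using 1
      · rfl
      · rfl
      · funext s; simp [div_eq_mul_inv]
      · ring
    have hD : deriv (fun s => Δp s * Δm s) q = -(4 * l ^ 6 / (1 - q) ^ 2) := by
      rw [hev.deriv_eq, hderiv.deriv]
    rw [hD, hΔp, hΔm]
    have hsq : Real.sqrt (1 - q) * Real.sqrt (1 - q) = 1 - q :=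
      Real.mul_self_sqrt (le_of_lt hq)
    have hl6 : (4 : ℝ) * l ^ 6 ≠ 0 := by positivity
    field_simp
    nlinarith [hsq, sq_nonneg (1 - q), hq]
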